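/- arXiv:1506.03262 — 2 statements merged into one kernel-verified Lean document; each statement's English description precedes it below -/
import Mathlib

section
/- (Relative select for supersequences, common-character case.) Let S₁ be a subsequence of S₂ witnessed by a strictly increasing character-preserving map g : {1,…,|S₁|} → {1,…,|S₂|}. Define B of length |S₂| by B[p] = 1 iff p ∉ im(g), and for each character x define B_x of length occ(x, S₂) by B_x[i] = 1 iff the position of the i-th occurrence of x in S₂ is not in im(g). Then for every character x and every i with 1 ≤ i ≤ occ(x, S₂) such that B_x[i] = 0: select_x(S₂, i) = select₀(B, select_x(S₁, rank₀(B_x, i))). -/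
namespace RS

variable {α : Type*} [DecidableEq α]

/-- 1-indexed position of the `j`-th occurrence of `a` in `S` (junk value if out of range). -/
def sel (a : α) (S : List α) (j : ℕ) : ℕ :=
  (((List.range S.length).filter (fun p => decide (S[p]? = some a))).getD (j - 1) 0) + 1

/-- Number of occurrences of `a` among the first `i` characters of `S` (1-indexed). -/
def rank (a : α) (S : List α) (i : ℕ) : ℕ := (S.take i).count a

/-- Total number of occurrences of `a` in `S`. -/
def occ (a : α) (S : List α) : ℕ := S.count a

def rank0 (B : List Bool) (i : ℕ) : ℕ := (B.take i).count false
def rank1 (B : List Bool) (i : ℕ) : ℕ := (B.take i).count true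
def sel0 (B : List Bool) (i : ℕ) : ℕ := sel false B i
def sel1 (B : List Bool) (i : ℕ) : ℕ := sel true B i

/-- `f` is a strictly increasing, character-preserving embedding of `S₂` into `S₁`
(all positions 1-indexed). -/
def Emb (S₂ S₁ : List α) (f : ℕ → ℕ) : Prop :=
  (∀ j, 1 ≤ j → j ≤ S₂.length → 1 ≤ f j ∧ f j ≤ S₁.length) ∧
  (∀ j k, 1 ≤ j → j < k → k ≤ S₂.length → f j < f k) ∧
  (∀ j, 1 ≤ j → j ≤ S₂.length → S₂[j - 1]? = S₁[f j - 1]?)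

/-- Is the 1-indexed position `p` in the image `{f 1, …, f m}`? -/
def inIm (m : ℕ) (f : ℕ → ℕ) (p : ℕ) : Bool :=
  (List.range m).any (fun j => f (j + 1) == p)

/-- Bitvector of length `n` marking with `true` (`1`) the 1-indexed positions
outside the image `{f 1, …, f m}`. -/
def markB (n m : ℕ) (f : ℕ → ℕ) : List Bool :=
  (List.range n).map (fun p => !inIm m f (p + 1))

/-- Bitvector of length `occ x S` whose `i`-th bit is `true` (`1`) iff the position
of the `i`-th occurrence of `x` in `S` is outside the image `{f 1, …, f m}`. -/
def markBx (x : α) (S : List α) (m : ℕ) (f : ℕ → ℕ) : List Bool :=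
  (List.range (occ x S)).map (fun i => !inIm m f (sel x S (i + 1)))

/-- The subsequence of `S` consisting of the characters at positions outside
the image `{g 1, …, g m}`, in order. -/
def delIm (S : List α) (m : ℕ) (g : ℕ → ℕ) : List α :=
  (List.range S.length).filterMap (fun p => if inIm m g (p + 1) then none else S[p]?)


/-- 0-indexed list of positions of `a` in `S`. -/
def posL (a : α) (S : List α) : List ℕ :=
  (List.range S.length).filter (fun p => decide (S[p]? = some a))

lemma sel_eq' (a : α) (S : List α) (j : ℕ) : sel a S j = (posL a S).getD (j-1) 0 + 1 := rfl

lemma length_posL (a : α) : ∀ S : List α, (posL a S).length = occ a S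
  | [] => rfl
  | b :: S => by
    simp only [posL, occ, List.length_cons, List.range_succ_eq_map, List.filter_cons,
      List.filter_map, List.count_cons, List.getElem?_cons_succ, List.getElem?_cons_zero,
      Function.comp_def]
    by_cases h : b = a <;>
      simp [h, posL, occ, ← List.count_eq_countP,
        show (List.filter (fun x => decide (S[x]? = some a)) (List.range S.length)).length
          = S.count a from length_posL a S]

lemma map_getD_range {β γ : Type*} (f : β → γ) (d : β) :
    ∀ l : List β, (List.range l.length).map (fun k => f (l.getD k d)) = l.map f
  | [] => rfl
  | b :: l => by
    simp only [List.length_cons, List.range_succ_eq_map, List.map_cons, List.map_map,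
      List.getD_cons_zero, Function.comp_def, List.getD_cons_succ]
    rw [map_getD_range f d l]

lemma filter_getElem?' {β : Type*} (q : β → Bool) :
    ∀ (l : List β) (k : ℕ), (hk : k < l.length) → q (l[k]) = true →
      (l.filter q)[(l.take k).countP q]? = some l[k]
  | b :: l, 0, hk, hq => by
    simp only [List.getElem_cons_zero] at hq ⊢
    simp [List.filter_cons, hq]
  | b :: l, k + 1, hk, hq => by
    have ih := filter_getElem?' q l k (by simpa using hk) (by simpa using hq)
    by_cases hb : q b <;> simp [List.filter_cons, hb, List.countP_cons, ih]

instance : IsAntisymm ℕ (· < ·) := ⟨fun a b h h' => absurd h' (Nat.lt_asymm h)⟩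

lemma eq_of_sorted {l₁ l₂ : List ℕ} (h₁ : List.Pairwise (· < ·) l₁)
    (h₂ : List.Pairwise (· < ·) l₂) (h : ∀ a, a ∈ l₁ ↔ a ∈ l₂) : l₁ = l₂ :=
  List.Perm.eq_of_pairwise (fun a b _ _ h h' => absurd h' (Nat.lt_asymm h)) h₁ h₂
    ((List.perm_ext_iff_of_nodup h₁.nodup h₂.nodup).mpr h)

lemma inIm_iff (m : ℕ) (f : ℕ → ℕ) (p : ℕ) :
    inIm m f p = true ↔ ∃ j < m, f (j + 1) = p := by simp [inIm]

lemma mem_posL {a : α} {S : List α} {p : ℕ} :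
    p ∈ posL a S ↔ p < S.length ∧ S[p]? = some a := by simp [posL]

lemma pairwise_posL (a : α) (S : List α) : List.Pairwise (· < ·) (posL a S) :=
  (List.pairwise_lt_range).filter _

lemma mem_posL_markB {n m : ℕ} {g : ℕ → ℕ} {p : ℕ} :
    p ∈ posL false (markB n m g) ↔ p < n ∧ inIm m g (p + 1) = true := by
  rw [mem_posL]
  simp only [markB, List.length_map, List.length_range, List.getElem?_map]
  constructor
  · rintro ⟨hp, h⟩
    rw [List.getElem?_range hp] at h
    simp only [Option.map_some, Option.some.injEq, Bool.not_eq_false'] at h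
    exact ⟨hp, h⟩
  · rintro ⟨hp, h⟩
    refine ⟨hp, ?_⟩
    rw [List.getElem?_range hp]
    simp [h]

lemma posL_markB (n m : ℕ) (g : ℕ → ℕ)
    (hb : ∀ j, 1 ≤ j → j ≤ m → 1 ≤ g j ∧ g j ≤ n)
    (hmono : ∀ j k, 1 ≤ j → j < k → k ≤ m → g j < g k) :
    posL false (markB n m g) = (List.range m).map (fun j => g (j + 1) - 1) := by
  apply eq_of_sorted (pairwise_posL _ _)
  · rw [List.pairwise_map]
    refine (List.pairwise_lt_range (n := m)).imp_of_mem ?_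
    intro a b ha hb' hab
    have haM := List.mem_range.mp ha
    have hbM := List.mem_range.mp hb'
    have h2 := hmono (a+1) (b+1) (by omega) (by omega) (by omega)
    have h1 := hb (a+1) (by omega) (by omega)
    omega
  · intro p
    rw [mem_posL_markB]
    simp only [List.mem_map, List.mem_range, inIm_iff]
    constructor
    · rintro ⟨hp, j, hj, hgj⟩
      exact ⟨j, hj, by omega⟩
    · rintro ⟨j, hj, rfl⟩
      have h1 := hb (j+1) (by omega) (by omega)
      exact ⟨by omega, j, hj, by omega⟩

lemma posL_map_eq (S₁ S₂ : List α) (g : ℕ → ℕ) (hg : Emb S₁ S₂ g) (x : α) :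
    (posL x S₁).map (fun q => g (q + 1) - 1)
      = (posL x S₂).filter (fun p => inIm S₁.length g (p + 1)) := by
  obtain ⟨hb, hmono, hchar⟩ := hg
  apply eq_of_sorted
  · rw [List.pairwise_map]
    refine (pairwise_posL x S₁).imp_of_mem ?_
    intro a b ha hb' hab
    have haM := (mem_posL.mp ha).1
    have hbM := (mem_posL.mp hb').1
    have h2 := hmono (a+1) (b+1) (by omega) (by omega) (by omega)
    have h1 := hb (a+1) (by omega) (by omega)
    omega
  · exact (pairwise_posL x S₂).filter _
  · intro p
    simp only [List.mem_map, List.mem_filter, mem_posL, inIm_iff]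
    constructor
    · rintro ⟨q, ⟨hq, hxq⟩, rfl⟩
      have hbq := hb (q+1) (by omega) (by omega)
      have hc := hchar (q+1) (by omega) (by omega)
      simp only [Nat.add_sub_cancel] at hc
      rw [hc] at hxq
      exact ⟨⟨by omega, hxq⟩, q, hq, by omega⟩
    · rintro ⟨⟨hp, hxp⟩, j, hj, hgj⟩
      refine ⟨j, ⟨hj, ?_⟩, by omega⟩
      have hc := hchar (j+1) (by omega) (by omega)
      simp only [Nat.add_sub_cancel] at hc
      rw [hc, show g (j+1) - 1 = p by omega]
      exact hxp

lemma markBx_eq (x : α) (S : List α) (m : ℕ) (f : ℕ → ℕ) :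
    markBx x S m f = (posL x S).map (fun p => !inIm m f (p + 1)) := by
  rw [markBx, ← length_posL, ← map_getD_range (fun p => !inIm m f (p + 1)) 0 (posL x S)]
  simp only [sel_eq', Nat.add_sub_cancel]

theorem relative_select_supersequence_common (S₁ S₂ : List α) (g : ℕ → ℕ)
    (hg : Emb S₁ S₂ g) (x : α) (i : ℕ) (hi1 : 1 ≤ i) (hi2 : i ≤ occ x S₂)
    (hbit : (markBx x S₂ S₁.length g)[i - 1]? = some false) :
    sel x S₂ i =
      sel0 (markB S₂.length S₁.length g)
        (sel x S₁ (rank0 (markBx x S₂ S₁.length g) i)) := by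
  obtain ⟨hb, hmono, hchar⟩ := hg
  set m := S₁.length with hm
  set n := S₂.length with hn
  set L₂ := posL x S₂ with hL₂
  set L₁ := posL x S₁ with hL₁
  set pr : ℕ → Bool := fun p => inIm m g (p + 1) with hpr
  have hlen₂ : L₂.length = occ x S₂ := length_posL x S₂
  have hi' : i - 1 < L₂.length := by omega
  set p := L₂[i-1] with hp
  have hBx : markBx x S₂ m g = L₂.map (fun p => !pr p) := markBx_eq x S₂ m g
  rw [hBx, List.getElem?_map, List.getElem?_eq_getElem hi'] at hbit
  simp only [Option.map_some, Option.some.injEq, Bool.not_eq_false'] at hbit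
  have hcount : ∀ b : Bool, ((!b) == false) = b := by decide
  have hj : rank0 (markBx x S₂ m g) i = (L₂.take (i-1)).countP pr + 1 := by
    rw [hBx, rank0, ← List.map_take, List.count_eq_countP, List.countP_map]
    have : ((fun x => x == false) ∘ fun p => !pr p) = pr := by
      funext q; simp [Function.comp, hcount]
    rw [this, show i = (i-1)+1 by omega, List.take_succ, List.getElem?_eq_getElem hi',
      List.countP_append]
    simp [hbit]
  have hfil := filter_getElem?' pr L₂ (i-1) hi' hbit
  rw [← posL_map_eq S₁ S₂ g ⟨hb, hmono, hchar⟩ x, List.getElem?_map] at hfil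
  obtain ⟨q, hq1, hq2⟩ := Option.map_eq_some_iff.mp hfil
  have hclt : List.countP pr (L₂.take (i-1)) < L₁.length := by
    have := List.getElem?_eq_some_iff.mp hq1
    exact this.1
  have hqm : q < m := by
    have hmem : q ∈ L₁ := List.mem_of_getElem? hq1
    exact (mem_posL.mp hmem).1
  have hgq := hb (q+1) (by omega) (by omega)
  rw [hj]
  have hsel1 : sel x S₁ (List.countP pr (L₂.take (i-1)) + 1) = q + 1 := by
    rw [sel_eq', Nat.add_sub_cancel, List.getD_eq_getElem _ _ hclt]
    have := (List.getElem?_eq_some_iff.mp hq1).2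
    rw [this]
  rw [hsel1]
  have hsel0 : sel0 (markB n m g) (q + 1) = g (q+1) - 1 + 1 := by
    rw [sel0, sel_eq', posL_markB n m g hb hmono, Nat.add_sub_cancel]
    have hql : q < ((List.range m).map (fun j => g (j + 1) - 1)).length := by
      simpa using hqm
    rw [List.getD_eq_getElem _ _ hql, List.getElem_map, List.getElem_range]
  rw [hsel0, sel_eq', List.getD_eq_getElem _ _ hi']
  omega


end RS
end

section
/- For any string S of length n over a finite totally ordered alphabet, the function Ψ defined on {1, …, n} by Ψ(i) = select_c(S, i − C[c]), where c is the unique character with C[c] < i ≤ C[c] + occ(c, S), is the inverse of the LF mapping LF(i) = C[S[i]] + rank_{S[i]}(S, i); i.e., Ψ(LF(i)) = i and LF(Ψ(i)) = i for all 1 ≤ i ≤ n. -/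
namespace RS

variable {α : Type*} [DecidableEq α]

lemma countP_eq_of_split (L : List ℕ) (p : ℕ → Bool) (j : ℕ) (hj : j ≤ L.length)
    (h1 : ∀ k (hk : k < j), p (L[k]'(lt_of_lt_of_le hk hj)) = true)
    (h2 : ∀ k (hk : k < L.length), j ≤ k → p L[k] = false) :
    L.countP p = j := by
  conv_lhs => rw [← List.take_append_drop j L]
  rw [List.countP_append]
  have hA : (L.take j).countP p = j := by
    have hlen : (L.take j).length = j := by simp [List.length_take]; omega
    conv_rhs => rw [← hlen]
    rw [List.countP_eq_length]
    intro a ha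
    obtain ⟨k, hk, rfl⟩ := List.mem_iff_getElem.1 ha
    rw [List.getElem_take]
    exact h1 k (by omega)
  have hB : (L.drop j).countP p = 0 := by
    rw [List.countP_eq_zero]
    intro a ha
    obtain ⟨k, hk, rfl⟩ := List.mem_iff_getElem.1 ha
    rw [List.getElem_drop]
    simp only [List.length_drop] at hk
    simp [h2 (j + k) (by omega) (by omega)]
  omega

lemma sorted_countP_lt (L : List ℕ) (h : L.Pairwise (· < ·)) (j : ℕ) (hj : j < L.length) :
    L.countP (fun x => decide (x < L[j])) = j := by
  apply countP_eq_of_split L _ j (le_of_lt hj)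
  · intro k hk
    simp only [decide_eq_true_iff]
    exact List.pairwise_iff_getElem.1 h k j _ hj hk
  · intro k hk hjk
    simp only [decide_eq_false_iff_not, not_lt]
    rcases eq_or_lt_of_le hjk with h' | h'
    · have : L[j] = L[k]'hk := by subst h'; rfl
      omega
    · exact le_of_lt (List.pairwise_iff_getElem.1 h j k hj hk h')

lemma sorted_countP_le (L : List ℕ) (h : L.Pairwise (· < ·)) (j : ℕ) (hj : j < L.length) :
    L.countP (fun x => decide (x < L[j] + 1)) = j + 1 := by
  apply countP_eq_of_split L _ (j + 1) (by omega)
  · intro k hk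
    simp only [decide_eq_true_iff]
    rcases eq_or_lt_of_le (Nat.lt_succ_iff.1 hk) with h' | h'
    · have : L[k]'(by omega) = L[j] := by subst h'; rfl
      omega
    · have := List.pairwise_iff_getElem.1 h k j (by omega) hj h'
      omega
  · intro k hk hjk
    simp only [decide_eq_false_iff_not, not_lt]
    have := List.pairwise_iff_getElem.1 h j k hj hk (by omega)
    omega

lemma rank_eq' {β : Type*} [DecidableEq β] (c : β) (S : List β) (i : ℕ) :
    (S.take i).count c =
      (List.range S.length).countP (fun p => decide (p < i) && decide (S[p]? = some c)) := by
  induction S generalizing i with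
  | nil => simp
  | cons a T ih =>
    cases i with
    | zero => simp
    | succ i =>
      rw [List.length_cons, List.range_succ_eq_map, List.countP_cons, List.countP_map,
        List.take_succ_cons, List.count_cons]
      have : ((fun p => decide (p < i + 1) && decide ((a :: T)[p]? = some c)) ∘ Nat.succ)
          = fun p => decide (p < i) && decide (T[p]? = some c) := by
        funext p
        simp [Nat.succ_lt_succ_iff]
      rw [this, ← ih]
      simp only [List.getElem?_cons_zero, Option.some.injEq, List.count_cons,
        Nat.zero_lt_succ, decide_true, Bool.true_and]
      by_cases h : a = c <;> simp [h]

lemma rank_eq_countP {β : Type*} [DecidableEq β] (c : β) (S : List β) (i : ℕ) :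
    rank c S i =
      ((List.range S.length).filter (fun p => decide (S[p]? = some c))).countP
        (fun x => decide (x < i)) := by
  rw [rank, rank_eq', List.countP_filter]

lemma length_occ {β : Type*} [DecidableEq β] (c : β) (S : List β) :
    ((List.range S.length).filter (fun p => decide (S[p]? = some c))).length = occ c S := by
  rw [← List.countP_eq_length_filter, occ]
  have : S.count c = (S.take S.length).count c := by rw [List.take_length]
  rw [this, rank_eq']
  apply List.countP_congr
  intro x hx
  simp only [List.mem_range] at hx
  simp [hx]

lemma sortedL {β : Type*} [DecidableEq β] (c : β) (S : List β) :
    ((List.range S.length).filter (fun p => decide (S[p]? = some c))).Pairwise (· < ·) :=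
  List.Pairwise.filter _ List.pairwise_lt_range

lemma countP_lt_add_count {β : Type*} [LinearOrder β] (c : β) (S : List β) :
    S.countP (fun y => decide (y < c)) + S.count c = S.countP (fun y => decide (y ≤ c)) := by
  induction S with
  | nil => simp
  | cons a T ih =>
    rw [List.countP_cons, List.count_cons, List.countP_cons]
    rcases lt_trichotomy a c with h | h | h
    · simp [h, ne_of_lt h, le_of_lt h]; omega
    · subst h; simp; omega
    · simp [not_lt_of_gt h, ne_of_gt h, not_le_of_gt h]; omega

theorem psi_inverse_lf {β : Type*} [LinearOrder β] [Inhabited β] (S : List β)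
    (LF : ℕ → ℕ)
    (hLF : ∀ i : ℕ, LF i =
      S.countP (fun y => decide (y < S.getD (i - 1) default)) +
        rank (S.getD (i - 1) default) S i)
    (i : ℕ) (hi1 : 1 ≤ i) (hi2 : i ≤ S.length) :
    (∀ c : β, S.countP (fun y => decide (y < c)) < i →
        i ≤ S.countP (fun y => decide (y < c)) + occ c S →
        LF (sel c S (i - S.countP (fun y => decide (y < c)))) = i) ∧
    (∀ c : β, S.countP (fun y => decide (y < c)) < LF i →
        LF i ≤ S.countP (fun y => decide (y < c)) + occ c S →
        sel c S (LF i - S.countP (fun y => decide (y < c))) = i) := by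
  constructor
  · intro c h1 h2
    set C := S.countP (fun y => decide (y < c)) with hCdef
    set L := (List.range S.length).filter (fun p => decide (S[p]? = some c)) with hLdef
    have hlen : L.length = occ c S := length_occ c S
    have hj : i - C - 1 < L.length := by rw [hlen]; omega
    have hsel : sel c S (i - C) = L[i - C - 1] + 1 := by
      rw [sel, ← hLdef, List.getD_eq_getElem L 0 hj]
    set p := L[i - C - 1] with hpdef
    have hpmem : p ∈ L := List.getElem_mem hj
    rw [hLdef, List.mem_filter, List.mem_range] at hpmem
    have hpc : S[p]? = some c := by simpa using hpmem.2
    have hgetD : S.getD (p + 1 - 1) default = c := by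
      simp [List.getD_eq_getElem?_getD, hpc]
    have hrank : rank c S (p + 1) = (i - C - 1) + 1 :=
      (rank_eq_countP c S (p + 1)).trans (sorted_countP_le L (sortedL c S) _ hj)
    rw [hsel, hLF (p + 1), hgetD, hrank, ← hCdef]
    omega
  · intro c h1 h2
    have hi' : i - 1 < S.length := by omega
    have hget : S[i-1]? = some (S.getD (i-1) default) := by
      rw [List.getElem?_eq_getElem hi', List.getD_eq_getElem S default hi']
    set c0 := S.getD (i - 1) default with hc0def
    set C0 := S.countP (fun y => decide (y < c0)) with hC0def
    set L0 := (List.range S.length).filter (fun p => decide (S[p]? = some c0)) with hL0def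
    have hlen0 : L0.length = occ c0 S := length_occ c0 S
    have hmem : (i - 1) ∈ L0 := by
      rw [hL0def, List.mem_filter, List.mem_range]
      exact ⟨hi', by simp [hget]⟩
    obtain ⟨k, hk, hLk⟩ := List.mem_iff_getElem.1 hmem
    have hrank : rank c0 S i = k + 1 := by
      have := sorted_countP_le L0 (sortedL c0 S) k hk
      rw [hLk] at this
      rw [rank_eq_countP c0 S i, ← hL0def]
      have hii : i - 1 + 1 = i := by omega
      rw [hii] at this
      exact this
    have hLFi : LF i = C0 + (k + 1) := by rw [hLF i, ← hc0def, ← hC0def, hrank]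
    have hko : k + 1 ≤ occ c0 S := by omega
    have hcc : c = c0 := by
      by_contra hne
      rcases lt_or_gt_of_ne hne with h | h
      · have hle : S.countP (fun y => decide (y < c)) + occ c S ≤ C0 := by
          rw [occ, countP_lt_add_count, hC0def]
          apply List.countP_mono_left
          intro y _ hy
          simp only [decide_eq_true_iff] at hy ⊢
          exact lt_of_le_of_lt hy h
        omega
      · have hle : C0 + occ c0 S ≤ S.countP (fun y => decide (y < c)) := by
          rw [occ, countP_lt_add_count]
          apply List.countP_mono_left
          intro y _ hy
          simp only [decide_eq_true_iff] at hy ⊢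
          exact lt_of_le_of_lt hy h
        omega
    subst hcc
    have hdiff : LF i - C0 = k + 1 := by omega
    rw [hdiff, sel, ← hL0def]
    have : k + 1 - 1 = k := by omega
    rw [this, List.getD_eq_getElem L0 0 hk, hLk]
    omega

end RS
end
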